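/- Semantic well-formed pairs: if (H, ρ) is a well-interpreted environment for Γ in the pair-extended F<:^DR calculus, then for every type T, the interpretation ⟦T⟧ρ satisfies the well-formed pair property WFPair. -/

import Mathlib

/-- Selectors for selection paths (pair-extended calculus). -/
inductive Sel
  | dom | ran | fst | snd
  deriving DecidableEq

/-- A selection path is a finite list of selectors. -/
abbrev SelPath := List Sel

/-- Path positivity: flipped by `dom`, preserved by `ran`, `fst`, `snd`. -/
def pos : SelPath → Bool
  | [] => true
  | .dom :: s => !(pos s)
  | .ran :: s => pos s
  | .fst :: s => pos s
  | .snd :: s => pos s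

/-- Types of the pair-extended F<:^DR. -/
inductive Ty
  | base | top | bot
  | tvar : Nat → Ty
  | arrow : Ty → Ty → Ty
  | all : Ty → Ty → Ty
  | dom : Ty → Ty
  | range : Ty → Ty
  | prod : Ty → Ty → Ty
  | fst : Ty → Ty
  | snd : Ty → Ty
  deriving DecidableEq

/-- Terms of the pair-extended F<:^DR. -/
inductive Tm
  | cst
  | var : Nat → Tm
  | abs : Tm → Tm
  | app : Tm → Tm → Tm
  | tabs : Tm → Tm
  | tapp : Tm → Ty → Tm
  | pair : Tm → Tm → Tm
  | fst : Tm → Tm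
  | snd : Tm → Tm
  deriving DecidableEq

/-- Values. -/
inductive Val
  | cst
  | clos : List Val → Tm → Val
  | tclos : List Val → Tm → Val
  | pair : Val → Val → Val

/-- Big-step evaluation. -/
inductive Eval : List Val → Tm → Val → Prop
  | cst : Eval H .cst .cst
  | var : H[x]? = some v → Eval H (.var x) v
  | abs : Eval H (.abs t) (.clos H t)
  | tabs : Eval H (.tabs t) (.tclos H t)
  | app : Eval H t₁ (.clos H' t') → Eval H t₂ vx → Eval (vx :: H') t' v →
      Eval H (.app t₁ t₂) v
  | tapp : Eval H t (.tclos H' t') → Eval H' t' v → Eval H (.tapp t T) v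
  | pair : Eval H t₁ v₁ → Eval H t₂ v₂ → Eval H (.pair t₁ t₂) (.pair v₁ v₂)
  | fst : Eval H t (.pair v₁ v₂) → Eval H (.fst t) v₁
  | snd : Eval H t (.pair v₁ v₂) → Eval H (.snd t) v₂

/-- A value type: a set of (value, selection path) pairs. -/
abbrev VTy := Set (Val × SelPath)

/-- Projection of a value type at a selection path. -/
def proj (V : VTy) (s : SelPath) : Set Val := {v | (v, s) ∈ V}

/-- Sub-value-interpretation relation `≤ₛ`. -/
def vstp (V₁ V₂ : VTy) : Prop :=
  ∀ s : SelPath, (pos s = true → proj V₁ s ⊆ proj V₂ s) ∧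
    (pos s = false → proj V₂ s ⊆ proj V₁ s)

/-- Well-formed functionality property. -/
def WFFun (V : VTy) : Prop :=
  ∀ v s, (v, s) ∈ V → ∀ v₁, (v₁, s ++ [Sel.dom]) ∈ V →
    ∃ H t, v = Val.clos H t ∧
      ∃ v₂, Eval (v₁ :: H) t v₂ ∧ (v₂, s ++ [Sel.ran]) ∈ V

/-- Well-formed pair property. -/
def WFPair (V : VTy) : Prop :=
  ∀ v₁ v₂ s, (Val.pair v₁ v₂, s) ∈ V →
    (v₁, s ++ [Sel.fst]) ∈ V ∧ (v₂, s ++ [Sel.snd]) ∈ V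

/-- Value interpretation of types, with delayed projections via selection paths. -/
def interp : Ty → List VTy → SelPath → Set Val
  | .base, _, [] => {Val.cst}
  | .base, _, sl :: s => if pos (sl :: s) then Set.univ else ∅
  | .top, _, s => if pos s then Set.univ else ∅
  | .bot, _, s => if pos s then ∅ else Set.univ
  | .tvar X, ρ, s => {v | ∃ V, ρ[X]? = some V ∧ (v, s) ∈ V}
  | .arrow T₁ T₂, ρ, [] =>
      {v | ∃ H t, v = Val.clos H t ∧
        ∀ v₁ ∈ interp T₁ ρ [], ∃ v₂, Eval (v₁ :: H) t v₂ ∧ v₂ ∈ interp T₂ ρ []}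
  | .arrow T₁ _, ρ, .dom :: s => interp T₁ ρ s
  | .arrow _ T₂, ρ, .ran :: s => interp T₂ ρ s
  | .arrow _ _, _, sl :: s =>
      if pos (sl :: s) then Set.univ else ∅
  | .dom T, ρ, s => interp T ρ (.dom :: s)
  | .range T, ρ, s => interp T ρ (.ran :: s)
  | .prod T₁ T₂, ρ, [] =>
      {v | ∃ v₁ v₂, v = Val.pair v₁ v₂ ∧
        v₁ ∈ interp T₁ ρ [] ∧ v₂ ∈ interp T₂ ρ []}
  | .prod T₁ _, ρ, .fst :: s => interp T₁ ρ s
  | .prod _ T₂, ρ, .snd :: s => interp T₂ ρ s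
  | .prod _ _, _, sl :: s => if pos (sl :: s) then Set.univ else ∅
  | .fst T, ρ, s => interp T ρ (.fst :: s)
  | .snd T, ρ, s => interp T ρ (.snd :: s)
  | .all U T, ρ, [] =>
      {v | ∃ H t, v = Val.tclos H t ∧
        ∀ V : VTy, WFFun V → WFPair V → vstp V {p | p.1 ∈ interp U ρ p.2} →
          ∃ v', Eval H t v' ∧ v' ∈ interp T (V :: ρ) []}
  | .all _ _, _, sl :: s => if pos (sl :: s) then Set.univ else ∅

/-- Interpretation of a type as a value type. -/
def interpV (ρ : List VTy) (T : Ty) : VTy := {p | p.1 ∈ interp T ρ p.2}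

/-- Shifting of type variables `≥ c` by `d`. -/
def shiftTy (d : Nat) : Ty → Nat → Ty
  | .base, _ => .base
  | .top, _ => .top
  | .bot, _ => .bot
  | .tvar X, c => if c ≤ X then .tvar (X + d) else .tvar X
  | .arrow a b, c => .arrow (shiftTy d a c) (shiftTy d b c)
  | .all u t, c => .all (shiftTy d u c) (shiftTy d t (c + 1))
  | .dom t, c => .dom (shiftTy d t c)
  | .range t, c => .range (shiftTy d t c)
  | .prod a b, c => .prod (shiftTy d a c) (shiftTy d b c)
  | .fst t, c => .fst (shiftTy d t c)
  | .snd t, c => .snd (shiftTy d t c)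

/-- Substitution of `U` for type variable `k`. -/
def substTy (U : Ty) : Ty → Nat → Ty
  | .base, _ => .base
  | .top, _ => .top
  | .bot, _ => .bot
  | .tvar X, k => if X = k then shiftTy k U 0
      else if k < X then .tvar (X - 1) else .tvar X
  | .arrow a b, k => .arrow (substTy U a k) (substTy U b k)
  | .all u t, k => .all (substTy U u k) (substTy U t (k + 1))
  | .dom t, k => .dom (substTy U t k)
  | .range t, k => .range (substTy U t k)
  | .prod a b, k => .prod (substTy U a k) (substTy U b k)
  | .fst t, k => .fst (substTy U t k)
  | .snd t, k => .snd (substTy U t k)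

/-- Subtyping of the pair-extended F<:^DR. -/
inductive Stp : List Ty → Ty → Ty → Prop
  | top : Stp Δ T .top
  | bot : Stp Δ .bot T
  | refl : Stp Δ T T
  | trans : Stp Δ T₁ T₂ → Stp Δ T₂ T₃ → Stp Δ T₁ T₃
  | tvar : Δ[X]? = some U → Stp Δ (.tvar X) (shiftTy (X + 1) U 0)
  | arrow : Stp Δ T₁ S₁ → Stp Δ S₂ T₂ → Stp Δ (.arrow S₁ S₂) (.arrow T₁ T₂)
  | all : Stp (U :: Δ) S T → Stp Δ (.all U S) (.all U T)
  | domIntro : Stp Δ T₁ (.dom (.arrow T₁ T₂))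
  | domElim : Stp Δ (.dom (.arrow T₁ T₂)) T₁
  | ranIntro : Stp Δ T₂ (.range (.arrow T₁ T₂))
  | ranElim : Stp Δ (.range (.arrow T₁ T₂)) T₂
  | domCongr : Stp Δ T S → Stp Δ (.dom S) (.dom T)
  | ranCongr : Stp Δ S T → Stp Δ (.range S) (.range T)
  | pair : Stp Δ S₁ T₁ → Stp Δ S₂ T₂ → Stp Δ (.prod S₁ S₂) (.prod T₁ T₂)
  | fstIntro : Stp Δ T₁ (.fst (.prod T₁ T₂))
  | fstElim : Stp Δ (.fst (.prod T₁ T₂)) T₁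
  | sndIntro : Stp Δ T₂ (.snd (.prod T₁ T₂))
  | sndElim : Stp Δ (.snd (.prod T₁ T₂)) T₂
  | fstCongr : Stp Δ T₁ T₂ → Stp Δ (.fst T₁) (.fst T₂)
  | sndCongr : Stp Δ T₁ T₂ → Stp Δ (.snd T₁) (.snd T₂)

/-- Typing of the pair-extended F<:^DR. -/
inductive HasType : List Ty → List Ty → Tm → Ty → Prop
  | cst : HasType Δ Γ .cst .base
  | var : Γ[x]? = some T → HasType Δ Γ (.var x) T
  | sub : HasType Δ Γ t T₁ → Stp Δ T₁ T₂ → HasType Δ Γ t T₂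
  | abs : HasType Δ (T₁ :: Γ) t T₂ → HasType Δ Γ (.abs t) (.arrow T₁ T₂)
  | appDR : HasType Δ Γ f F → HasType Δ Γ t (.dom F) →
      HasType Δ Γ (.app f t) (.range F)
  | tabs : HasType (U :: Δ) Γ t T → HasType Δ Γ (.tabs t) (.all U T)
  | tapp : Stp Δ S U → HasType Δ Γ f (.all U T) →
      HasType Δ Γ (.tapp f S) (substTy S T 0)
  | pair : HasType Δ Γ t₁ T₁ → HasType Δ Γ t₂ T₂ →
      HasType Δ Γ (.pair t₁ t₂) (.prod T₁ T₂)
  | fst : HasType Δ Γ t T → Stp Δ T (.prod T₁ T₂) →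
      HasType Δ Γ (.fst t) (.fst T)
  | snd : HasType Δ Γ t T → Stp Δ T (.prod T₁ T₂) →
      HasType Δ Γ (.snd t) (.snd T)

/-- Environment interpretation. -/
def EnvOK (Δ Γ : List Ty) (H : List Val) (ρ : List VTy) : Prop :=
  H.length = Γ.length ∧ ρ.length = Δ.length ∧
  (∀ x T, Γ[(x : Nat)]? = some T → ∃ v, H[x]? = some v ∧ v ∈ interp T ρ []) ∧
  (∀ X U, Δ[(X : Nat)]? = some U → ∃ V, ρ[X]? = some V ∧ WFFun V ∧ WFPair V ∧
    vstp V (interpV ρ U))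

/-- Semantic typing. -/
def SemType (Δ Γ : List Ty) (t : Tm) (T : Ty) : Prop :=
  ∀ H ρ, EnvOK Δ Γ H ρ → ∃ v, Eval H t v ∧ v ∈ interp T ρ []


lemma pos_append_fst : ∀ s, pos (s ++ [Sel.fst]) = pos s := by
  intro s; induction s with
  | nil => rfl
  | cons a t ih => cases a <;> simp [pos, ih]

lemma pos_append_snd : ∀ s, pos (s ++ [Sel.snd]) = pos s := by
  intro s; induction s with
  | nil => rfl
  | cons a t ih => cases a <;> simp [pos, ih]

lemma if_pos_case {v₁ v₂ : Val} (s : SelPath)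
    (h : Val.pair v₁ v₂ ∈ (if pos s = true then (Set.univ : Set Val) else ∅)) :
    v₁ ∈ (if pos (s ++ [Sel.fst]) = true then (Set.univ : Set Val) else ∅) ∧
    v₂ ∈ (if pos (s ++ [Sel.snd]) = true then (Set.univ : Set Val) else ∅) := by
  rw [pos_append_fst, pos_append_snd]
  split at h <;> simp_all

lemma interp_pair (ρ : List VTy) (hρ : ∀ V ∈ ρ, WFPair V) :
    ∀ (T : Ty) (s : SelPath) (v₁ v₂ : Val), Val.pair v₁ v₂ ∈ interp T ρ s →
      v₁ ∈ interp T ρ (s ++ [Sel.fst]) ∧ v₂ ∈ interp T ρ (s ++ [Sel.snd]) := by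
  intro T
  induction T with
  | base =>
    intro s v₁ v₂ h
    cases s with
    | nil => simp [interp] at h
    | cons sl s' => exact if_pos_case (sl :: s') h
  | top =>
    intro s v₁ v₂ h
    exact if_pos_case s h
  | bot =>
    intro s v₁ v₂ h
    have h' : Val.pair v₁ v₂ ∈ (if pos s = true then (∅ : Set Val) else Set.univ) := h
    constructor
    · show v₁ ∈ (if pos (s ++ [Sel.fst]) = true then (∅ : Set Val) else Set.univ)
      rw [pos_append_fst]
      split at h' <;> simp_all
    · show v₂ ∈ (if pos (s ++ [Sel.snd]) = true then (∅ : Set Val) else Set.univ)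
      rw [pos_append_snd]
      split at h' <;> simp_all
  | tvar X =>
    intro s v₁ v₂ h
    obtain ⟨V, hget, hmem⟩ := h
    have hV : WFPair V := hρ V (List.mem_of_getElem? hget)
    obtain ⟨h1, h2⟩ := hV _ _ _ hmem
    exact ⟨⟨V, hget, h1⟩, ⟨V, hget, h2⟩⟩
  | arrow T₁ T₂ ih₁ ih₂ =>
    intro s v₁ v₂ h
    cases s with
    | nil =>
      obtain ⟨H, t, heq, -⟩ := h
      exact absurd heq (by simp)
    | cons sl s' =>
      cases sl with
      | dom => exact ih₁ s' v₁ v₂ h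
      | ran => exact ih₂ s' v₁ v₂ h
      | fst => exact if_pos_case (Sel.fst :: s') h
      | snd => exact if_pos_case (Sel.snd :: s') h
  | all U T ihU ihT =>
    intro s v₁ v₂ h
    cases s with
    | nil =>
      obtain ⟨H, t, heq, -⟩ := h
      exact absurd heq (by simp)
    | cons sl s' => exact if_pos_case (sl :: s') h
  | dom T ih =>
    intro s v₁ v₂ h
    exact ih (Sel.dom :: s) v₁ v₂ h
  | range T ih =>
    intro s v₁ v₂ h
    exact ih (Sel.ran :: s) v₁ v₂ h
  | prod T₁ T₂ ih₁ ih₂ =>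
    intro s v₁ v₂ h
    cases s with
    | nil =>
      obtain ⟨a, b, heq, h1, h2⟩ := h
      cases heq
      exact ⟨h1, h2⟩
    | cons sl s' =>
      cases sl with
      | fst => exact ih₁ s' v₁ v₂ h
      | snd => exact ih₂ s' v₁ v₂ h
      | dom => exact if_pos_case (Sel.dom :: s') h
      | ran => exact if_pos_case (Sel.ran :: s') h
  | fst T ih =>
    intro s v₁ v₂ h
    exact ih (Sel.fst :: s) v₁ v₂ h
  | snd T ih =>
    intro s v₁ v₂ h
    exact ih (Sel.snd :: s) v₁ v₂ h

/-- semantic well-formed pairs: under a well-interpreted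
environment, every value interpretation satisfies `WFPair`. -/
theorem semantic_wfpair (Δ Γ : List Ty) (H : List Val) (ρ : List VTy)
    (hEnv : EnvOK Δ Γ H ρ) :
    ∀ T : Ty, WFPair (interpV ρ T) := by
  have hρ : ∀ V ∈ ρ, WFPair V := by
    intro V hV
    obtain ⟨X, hX⟩ := List.mem_iff_getElem?.mp hV
    have hlt : X < Δ.length := by
      have h1 := (List.getElem?_eq_some_iff.mp hX).1
      have h2 := hEnv.2.1
      omega
    have hU : Δ[X]? = some (Δ.get ⟨X, hlt⟩) := List.getElem?_eq_getElem hlt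
    obtain ⟨V', hV', -, hWF, -⟩ := hEnv.2.2.2 X _ hU
    rw [hX] at hV'
    cases hV'
    exact hWF
  intro T v₁ v₂ s h
  exact interp_pair ρ hρ T s v₁ v₂ h
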